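/- Let (𝔖¹_N)_{N≥1} and (𝔖²_N)_{N≥1} be two independent sequences of independent random permutations, with 𝔖¹_N and 𝔖²_N each uniformly distributed on the symmetric group of [N]×[N] (i.e. on the probability space ∏_{N≥1} (S([N]²) × S([N]²)) with the product of uniform measures). Then, almost surely as N → ∞, X_N(𝔖¹_N, 𝔖²_N)/N² → 0 and Y_N(𝔖¹_N, 𝔖²_N)/N³ → 0; i.e. almost every realization of the pair of sequences satisfies condition (C3). -/

import Mathlib

open MeasureTheory Filter

instance permMS (N : ℕ) : MeasurableSpace (Equiv.Perm (Fin N × Fin N)) := ⊤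

/-- `X_N(σ,τ)`. -/
def Xcnt (N : ℕ) (σ τ : Equiv.Perm (Fin N × Fin N)) : ℕ :=
  (Finset.univ.filter fun x : Fin N × Fin N × Fin N =>
    σ (x.1, x.2.1) = τ (x.1, x.2.2) ∨ σ (x.1, x.2.1) = τ (x.2.2, x.2.1)).card

/-- `Y_N(σ,τ)`. -/
def Ycnt (N : ℕ) (σ τ : Equiv.Perm (Fin N × Fin N)) : ℕ :=
  (Finset.univ.filter fun x : Fin N × Fin N × Fin N =>
    (σ (x.1, x.2.1)).1 = (τ (x.1, x.2.2)).1 ∨ (σ (x.1, x.2.1)).1 = (τ (x.2.2, x.2.1)).1).card +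
  (Finset.univ.filter fun x : Fin N × Fin N × Fin N =>
    (σ (x.1, x.2.1)).2 = (τ (x.1, x.2.2)).2 ∨ (σ (x.1, x.2.1)).2 = (τ (x.2.2, x.2.1)).2).card

open Finset

variable {α : Type*} [Fintype α] [DecidableEq α]

lemma fiber1_card_eq (a b c : α) :
    (univ.filter fun π : Equiv.Perm α => π a = b).card
      = (univ.filter fun π : Equiv.Perm α => π a = c).card := by
  refine Finset.card_nbij' (fun π => π.trans (Equiv.swap b c))
    (fun π => π.trans (Equiv.swap b c)) ?_ ?_ ?_ ?_
  · intro π hπ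
    simp only [Finset.mem_coe, mem_filter, mem_univ, true_and] at hπ ⊢
    simp [hπ]
  · intro π hπ
    simp only [Finset.mem_coe, mem_filter, mem_univ, true_and] at hπ ⊢
    simp [hπ, Equiv.swap_apply_right]
  · intro π _; ext x; simp
  · intro π _; ext x; simp

lemma fiber1_mul (a b : α) :
    (univ.filter fun π : Equiv.Perm α => π a = b).card * Fintype.card α
      = Fintype.card (Equiv.Perm α) := by
  have h := Finset.card_eq_sum_card_fiberwise
    (f := fun π : Equiv.Perm α => π a) (s := univ) (t := univ) (fun x _ => mem_univ _)
  rw [card_univ] at h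
  rw [h, Finset.sum_congr rfl (fun c (_ : c ∈ univ) => (fiber1_card_eq a c b : _))]
  simp [mul_comm, card_univ]

lemma exists_perm_two {b b' c c' : α} (hb : b ≠ b') (hc : c ≠ c') :
    ∃ g : Equiv.Perm α, g b = c ∧ g b' = c' := by
  set y := Equiv.swap b c b' with hy
  have hyc : y ≠ c := by
    intro h
    exact hb (Equiv.injective (Equiv.swap b c) (h.trans (Equiv.swap_apply_left b c).symm)).symm
  refine ⟨(Equiv.swap b c).trans (Equiv.swap y c'), ?_, ?_⟩
  · simp only [Equiv.trans_apply, Equiv.swap_apply_left]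
    exact Equiv.swap_apply_of_ne_of_ne hyc.symm hc
  · simp only [Equiv.trans_apply, ← hy, Equiv.swap_apply_left]

lemma fiber2_card_eq (a a' : α) {b b' c c' : α} (hb : b ≠ b') (hc : c ≠ c') :
    (univ.filter fun π : Equiv.Perm α => π a = b ∧ π a' = b').card
      = (univ.filter fun π : Equiv.Perm α => π a = c ∧ π a' = c').card := by
  obtain ⟨g, hg1, hg2⟩ := exists_perm_two hb hc
  refine Finset.card_nbij' (fun π => π.trans g) (fun π => π.trans g.symm) ?_ ?_ ?_ ?_
  · intro π hπ
    simp only [Finset.mem_coe, mem_filter, mem_univ, true_and, Equiv.trans_apply] at hπ ⊢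
    rw [hπ.1, hπ.2]; exact ⟨hg1, hg2⟩
  · intro π hπ
    simp only [Finset.mem_coe, mem_filter, mem_univ, true_and, Equiv.trans_apply] at hπ ⊢
    rw [hπ.1, hπ.2, ← hg1, ← hg2]
    simp
  · intro π _; ext x; simp
  · intro π _; ext x; simp

lemma fiber2_mul_le {a a' : α} (ha : a ≠ a') (b b' : α) :
    (univ.filter fun π : Equiv.Perm α => π a = b ∧ π a' = b').card
        * (Fintype.card α * (Fintype.card α - 1))
      ≤ Fintype.card (Equiv.Perm α) := by
  by_cases hb : b = b'
  · have : (univ.filter fun π : Equiv.Perm α => π a = b ∧ π a' = b').card = 0 := by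
      rw [Finset.card_eq_zero]
      ext π
      simp only [mem_filter, mem_univ, true_and, Finset.notMem_empty, iff_false, not_and]
      intro h1 h2
      exact ha (Equiv.injective π (h1.trans (hb.trans h2.symm)))
    simp [this]
  · have hpart := Finset.card_eq_sum_card_fiberwise
      (f := fun π : Equiv.Perm α => (π a, π a')) (s := univ) (t := univ.offDiag)
      (fun π _ => by
        simp only [Finset.mem_coe, Finset.mem_offDiag, mem_univ, true_and]
        exact fun h => ha (Equiv.injective π h))
    rw [card_univ] at hpart
    have heach : ∀ p ∈ univ.offDiag,
        (univ.filter fun π : Equiv.Perm α => (π a, π a') = p).card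
          = (univ.filter fun π : Equiv.Perm α => π a = b ∧ π a' = b').card := by
      rintro ⟨c, c'⟩ hp
      rw [Finset.mem_offDiag] at hp
      rw [Finset.filter_congr (fun π _ => by rw [Prod.mk.injEq])]
      exact fiber2_card_eq a a' hp.2.2 hb
    rw [hpart, Finset.sum_congr rfl heach, Finset.sum_const, smul_eq_mul,
      Finset.offDiag_card, card_univ]
    have : Fintype.card α * Fintype.card α - Fintype.card α
        = Fintype.card α * (Fintype.card α - 1) := by
      rw [Nat.mul_sub_one, Nat.mul_comm]
    rw [this, mul_comm]

lemma fiberS_mul (a : α) (S : Finset α) :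
    (univ.filter fun π : Equiv.Perm α => π a ∈ S).card * Fintype.card α
      = S.card * Fintype.card (Equiv.Perm α) := by
  have hpart := Finset.card_eq_sum_card_fiberwise
    (f := fun π : Equiv.Perm α => π a) (s := univ.filter fun π : Equiv.Perm α => π a ∈ S)
    (t := S) (fun π hπ => (mem_filter.mp hπ).2)
  have heach : ∀ b ∈ S,
      ((univ.filter fun π : Equiv.Perm α => π a ∈ S).filter fun π => π a = b).card
        = (univ.filter fun π : Equiv.Perm α => π a = b).card := by
    intro b hb
    congr 1
    rw [Finset.filter_filter]
    exact Finset.filter_congr (fun π _ => by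
      constructor
      · exact fun h => h.2
      · exact fun h => ⟨h ▸ hb, h⟩)
  rw [hpart, Finset.sum_congr rfl heach, Finset.sum_mul]
  rw [Finset.sum_congr rfl (fun b _ => fiber1_mul a b)]
  simp [mul_comm]

lemma fiberSS_le {a a' : α} (ha : a ≠ a') (S S' : Finset α) :
    (univ.filter fun π : Equiv.Perm α => π a ∈ S ∧ π a' ∈ S').card
        * (Fintype.card α * (Fintype.card α - 1))
      ≤ S.card * S'.card * Fintype.card (Equiv.Perm α) := by
  have hpart := Finset.card_eq_sum_card_fiberwise
    (f := fun π : Equiv.Perm α => (π a, π a'))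
    (s := univ.filter fun π : Equiv.Perm α => π a ∈ S ∧ π a' ∈ S')
    (t := S ×ˢ S') (fun π hπ => by
      rw [Finset.mem_coe, Finset.mem_product]
      exact (mem_filter.mp hπ).2)
  have heach : ∀ p ∈ S ×ˢ S',
      ((univ.filter fun π : Equiv.Perm α => π a ∈ S ∧ π a' ∈ S').filter
          fun π => (π a, π a') = p).card
        ≤ (univ.filter fun π : Equiv.Perm α => π a = p.1 ∧ π a' = p.2).card := by
    intro p _
    apply Finset.card_le_card
    intro π hπ
    simp only [mem_filter, mem_univ, true_and] at hπ ⊢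
    obtain ⟨-, h2⟩ := hπ
    exact ⟨congrArg Prod.fst h2, congrArg Prod.snd h2⟩
  calc (univ.filter fun π : Equiv.Perm α => π a ∈ S ∧ π a' ∈ S').card
        * (Fintype.card α * (Fintype.card α - 1))
      = (∑ p ∈ S ×ˢ S',
          ((univ.filter fun π : Equiv.Perm α => π a ∈ S ∧ π a' ∈ S').filter
            fun π => (π a, π a') = p).card) * (Fintype.card α * (Fintype.card α - 1)) := by
        rw [← hpart]
    _ ≤ (∑ p ∈ S ×ˢ S',
          (univ.filter fun π : Equiv.Perm α => π a = p.1 ∧ π a' = p.2).card)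
          * (Fintype.card α * (Fintype.card α - 1)) := by
        exact Nat.mul_le_mul_right _ (Finset.sum_le_sum heach)
    _ = ∑ p ∈ S ×ˢ S',
          (univ.filter fun π : Equiv.Perm α => π a = p.1 ∧ π a' = p.2).card
            * (Fintype.card α * (Fintype.card α - 1)) := by rw [Finset.sum_mul]
    _ ≤ ∑ _p ∈ S ×ˢ S', Fintype.card (Equiv.Perm α) :=
        Finset.sum_le_sum (fun p _ => fiber2_mul_le ha p.1 p.2)
    _ = S.card * S'.card * Fintype.card (Equiv.Perm α) := by
        rw [Finset.sum_const, Finset.card_product, smul_eq_mul]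

lemma cardS_le_real (a : α) (S : Finset α) (s : ℕ) (hS : S.card ≤ s)
    (hn : 0 < Fintype.card α) :
    ((univ.filter fun π : Equiv.Perm α => π a ∈ S).card : ℝ)
      ≤ s * Fintype.card (Equiv.Perm α) / Fintype.card α := by
  rw [le_div_iff₀ (by exact_mod_cast hn)]
  have := fiberS_mul a S
  have hcast : ((univ.filter fun π : Equiv.Perm α => π a ∈ S).card : ℝ) * Fintype.card α
      = S.card * Fintype.card (Equiv.Perm α) := by exact_mod_cast congrArg Nat.cast this
  rw [hcast]
  have : (S.card : ℝ) ≤ s := by exact_mod_cast hS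
  exact mul_le_mul_of_nonneg_right this (by positivity)

lemma cardSS_le_real {a a' : α} (ha : a ≠ a') (S S' : Finset α) (s : ℕ)
    (hS : S.card ≤ s) (hS' : S'.card ≤ s) (hn : 2 ≤ Fintype.card α) :
    ((univ.filter fun π : Equiv.Perm α => π a ∈ S ∧ π a' ∈ S').card : ℝ)
      ≤ 2 * s ^ 2 * Fintype.card (Equiv.Perm α) / (Fintype.card α) ^ 2 := by
  set n := Fintype.card α with hndef
  have hn0 : (0:ℝ) < (n:ℝ)^2 := by positivity
  rw [le_div_iff₀ hn0]
  have key : (univ.filter fun π : Equiv.Perm α => π a ∈ S ∧ π a' ∈ S').card * (n * (n-1))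
      ≤ s * s * Fintype.card (Equiv.Perm α) :=
    le_trans (fiberSS_le ha S S')
      (Nat.mul_le_mul_right _ (Nat.mul_le_mul hS hS'))
  have h2 : n^2 ≤ 2 * (n * (n-1)) := by
    obtain ⟨m, hm⟩ : ∃ m, n = m + 2 := ⟨n - 2, by omega⟩
    rw [hm]
    have : m + 2 - 1 = m + 1 := by omega
    rw [this]
    nlinarith
  calc ((univ.filter fun π : Equiv.Perm α => π a ∈ S ∧ π a' ∈ S').card : ℝ) * (n:ℝ)^2
      ≤ ((univ.filter fun π : Equiv.Perm α => π a ∈ S ∧ π a' ∈ S').card : ℝ)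
          * (2 * ((n : ℝ) * ((n:ℕ) - 1 : ℕ))) := by
        apply mul_le_mul_of_nonneg_left _ (by positivity)
        calc ((n:ℝ))^2 = ((n^2 : ℕ) : ℝ) := by push_cast; ring
          _ ≤ ((2 * (n * (n-1)) : ℕ) : ℝ) := by exact_mod_cast h2
          _ = 2 * ((n : ℝ) * ((n:ℕ) - 1 : ℕ)) := by push_cast; ring
    _ = 2 * (((univ.filter fun π : Equiv.Perm α => π a ∈ S ∧ π a' ∈ S').card * (n * (n-1)) : ℕ) : ℝ) := by
        push_cast; ring
    _ ≤ 2 * ((s * s * Fintype.card (Equiv.Perm α) : ℕ) : ℝ) := by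
        have : ((_ : ℕ) : ℝ) ≤ _ := Nat.cast_le.mpr key
        linarith [this]
    _ = 2 * s^2 * Fintype.card (Equiv.Perm α) := by push_cast; ring

section Generic

variable {N : ℕ}

local notation "β" => (Fin N × Fin N)
local notation "T" => (Fin N × Fin N × Fin N)

/-- Generic second moment bound. -/
lemma sum_sq_le (hN : 2 ≤ N) (a b : T → β) (S : β → Finset β) (s : ℕ)
    (hS : ∀ v, (S v).card ≤ s)
    (hb : ∀ x : β, (univ.filter fun t : T => b t = x).card ≤ N) :
    ∑ p : Equiv.Perm β × Equiv.Perm β,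
        (((univ.filter fun t : T => p.2 (b t) ∈ S (p.1 (a t))).card : ℝ)) ^ 2
      ≤ (s + 2 * s ^ 2) * N ^ 2 * (Fintype.card (Equiv.Perm β)) ^ 2 := by
  set K : ℝ := (Fintype.card (Equiv.Perm β) : ℝ) with hK
  have hK0 : 0 ≤ K := by positivity
  have hncard : Fintype.card β = N * N := by simp
  have hn2 : 2 ≤ Fintype.card β := by nlinarith
  have hNR : (0:ℝ) < (N:ℝ) := by exact_mod_cast (by omega : 0 < N)
  -- the inner bound for fixed σ, t, t'
  have inner : ∀ (σ : Equiv.Perm β) (t t' : T),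
      ((univ.filter fun τ : Equiv.Perm β =>
          τ (b t) ∈ S (σ (a t)) ∧ τ (b t') ∈ S (σ (a t'))).card : ℝ)
        ≤ (if b t = b t' then s * K / (N:ℝ)^2 else 2 * s^2 * K / (N:ℝ)^4) := by
    intro σ t t'
    by_cases hbt : b t = b t'
    · rw [if_pos hbt]
      calc ((univ.filter fun τ : Equiv.Perm β =>
              τ (b t) ∈ S (σ (a t)) ∧ τ (b t') ∈ S (σ (a t'))).card : ℝ)
          ≤ ((univ.filter fun τ : Equiv.Perm β => τ (b t) ∈ S (σ (a t))).card : ℝ) := by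
            exact_mod_cast Finset.card_le_card (by
              intro τ hτ
              simp only [mem_filter] at hτ ⊢
              exact ⟨hτ.1, hτ.2.1⟩)
        _ ≤ s * K / Fintype.card β := cardS_le_real _ _ s (hS _) (by omega)
        _ = s * K / (N:ℝ)^2 := by rw [hncard]; push_cast; ring_nf
    · rw [if_neg hbt]
      calc ((univ.filter fun τ : Equiv.Perm β =>
              τ (b t) ∈ S (σ (a t)) ∧ τ (b t') ∈ S (σ (a t'))).card : ℝ)
          ≤ 2 * s^2 * K / (Fintype.card β : ℝ)^2 :=
            cardSS_le_real hbt _ _ s (hS _) (hS _) hn2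
        _ = 2 * s^2 * K / (N:ℝ)^4 := by rw [hncard]; push_cast; ring_nf
  -- sum of the bound over t'
  have rowbound : ∀ t : T,
      ∑ t' : T, (if b t = b t' then s * K / (N:ℝ)^2 else 2 * s^2 * K / (N:ℝ)^4)
        ≤ s * K / N + 2 * s^2 * K / N := by
    intro t
    rw [Finset.sum_ite, Finset.sum_const, Finset.sum_const]
    have h1 : (univ.filter fun t' : T => b t = b t').card ≤ N := by
      calc (univ.filter fun t' : T => b t = b t').card
          = (univ.filter fun t' : T => b t' = b t).card := by
            congr 1; apply Finset.filter_congr; intro t' _; exact eq_comm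
        _ ≤ N := hb (b t)
    have h2 : (univ.filter fun t' : T => ¬ b t = b t').card ≤ N^3 := by
      calc (univ.filter fun t' : T => ¬ b t = b t').card ≤ Fintype.card T :=
            Finset.card_filter_le _ _ |>.trans (by simp [card_univ])
        _ = N^3 := by simp; ring
    have e1 : ((univ.filter fun t' : T => b t = b t').card : ℝ) ≤ N := by exact_mod_cast h1
    have e2 : ((univ.filter fun t' : T => ¬ b t = b t').card : ℝ) ≤ (N:ℝ)^3 := by
      exact_mod_cast h2
    have hb1 : (0:ℝ) ≤ s * K / (N:ℝ)^2 := by positivity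
    have hb2 : (0:ℝ) ≤ 2 * s^2 * K / (N:ℝ)^4 := by positivity
    calc ((univ.filter fun t' : T => b t = b t').card) • (s * K / (N:ℝ)^2)
          + ((univ.filter fun t' : T => ¬ b t = b t').card) • (2 * s^2 * K / (N:ℝ)^4)
        ≤ (N:ℝ) * (s * K / (N:ℝ)^2) + (N:ℝ)^3 * (2 * s^2 * K / (N:ℝ)^4) := by
          rw [nsmul_eq_mul, nsmul_eq_mul]
          exact add_le_add (mul_le_mul_of_nonneg_right e1 hb1)
            (mul_le_mul_of_nonneg_right e2 hb2)
      _ = s * K / N + 2 * s^2 * K / N := by field_simp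
  -- now the main computation
  have main : ∀ σ : Equiv.Perm β,
      ∑ τ : Equiv.Perm β,
        (((univ.filter fun t : T => τ (b t) ∈ S (σ (a t))).card : ℝ)) ^ 2
      ≤ (s + 2 * s^2) * N^2 * K := by
    intro σ
    have expand : ∀ τ : Equiv.Perm β,
        (((univ.filter fun t : T => τ (b t) ∈ S (σ (a t))).card : ℝ)) ^ 2
          = ∑ t : T, ∑ t' : T,
              (if (τ (b t) ∈ S (σ (a t)) ∧ τ (b t') ∈ S (σ (a t'))) then (1:ℝ) else 0) := by
      intro τ
      rw [Finset.card_filter]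
      push_cast
      rw [sq, Finset.sum_mul_sum]
      apply Finset.sum_congr rfl; intro t _
      apply Finset.sum_congr rfl; intro t' _
      by_cases h1 : τ (b t) ∈ S (σ (a t)) <;> by_cases h2 : τ (b t') ∈ S (σ (a t')) <;>
        simp [h1, h2]
    calc ∑ τ : Equiv.Perm β,
          (((univ.filter fun t : T => τ (b t) ∈ S (σ (a t))).card : ℝ)) ^ 2
        = ∑ τ : Equiv.Perm β, ∑ t : T, ∑ t' : T,
            (if (τ (b t) ∈ S (σ (a t)) ∧ τ (b t') ∈ S (σ (a t'))) then (1:ℝ) else 0) :=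
          Finset.sum_congr rfl (fun τ _ => expand τ)
      _ = ∑ t : T, ∑ t' : T, ∑ τ : Equiv.Perm β,
            (if (τ (b t) ∈ S (σ (a t)) ∧ τ (b t') ∈ S (σ (a t'))) then (1:ℝ) else 0) := by
          rw [Finset.sum_comm]
          apply Finset.sum_congr rfl; intro t _
          rw [Finset.sum_comm]
      _ = ∑ t : T, ∑ t' : T,
            ((univ.filter fun τ : Equiv.Perm β =>
              τ (b t) ∈ S (σ (a t)) ∧ τ (b t') ∈ S (σ (a t'))).card : ℝ) := by
          apply Finset.sum_congr rfl; intro t _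
          apply Finset.sum_congr rfl; intro t' _
          rw [Finset.card_filter]
          push_cast
          rfl
      _ ≤ ∑ t : T, ∑ t' : T,
            (if b t = b t' then s * K / (N:ℝ)^2 else 2 * s^2 * K / (N:ℝ)^4) := by
          apply Finset.sum_le_sum; intro t _
          exact Finset.sum_le_sum (fun t' _ => inner σ t t')
      _ ≤ ∑ _t : T, (s * K / N + 2 * s^2 * K / N) :=
          Finset.sum_le_sum (fun t _ => rowbound t)
      _ = (Fintype.card T : ℝ) * (s * K / N + 2 * s^2 * K / N) := by
          rw [Finset.sum_const, card_univ, nsmul_eq_mul]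
      _ = (s + 2 * s^2) * N^2 * K := by
          have : (Fintype.card T : ℝ) = (N:ℝ)^3 := by
            simp; push_cast; ring
          rw [this]; field_simp
  calc ∑ p : Equiv.Perm β × Equiv.Perm β,
        (((univ.filter fun t : T => p.2 (b t) ∈ S (p.1 (a t))).card : ℝ)) ^ 2
      = ∑ σ : Equiv.Perm β, ∑ τ : Equiv.Perm β,
          (((univ.filter fun t : T => τ (b t) ∈ S (σ (a t))).card : ℝ)) ^ 2 :=
        Fintype.sum_prod_type _
    _ ≤ ∑ _σ : Equiv.Perm β, (s + 2 * s^2) * N^2 * K :=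
        Finset.sum_le_sum (fun σ _ => main σ)
    _ = (s + 2 * s ^ 2) * N ^ 2 * (Fintype.card (Equiv.Perm β)) ^ 2 := by
        rw [Finset.sum_const, card_univ, nsmul_eq_mul, ← hK]
        ring

end Generic

section PerN

variable {N : ℕ}

local notation "β" => (Fin N × Fin N)
local notation "T" => (Fin N × Fin N × Fin N)

lemma card_filter_le_of_inj {γ : Type*} [Fintype γ] {P : γ → Prop} [DecidablePred P]
    {M : ℕ} (f : γ → Fin M) (hinj : ∀ x y, P x → P y → f x = f y → x = y) :
    (univ.filter P).card ≤ M := by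
  have := Finset.card_le_card_of_injOn f (s := univ.filter P) (t := univ)
    (fun x _ => mem_univ _) (by
      intro x hx y hy hf
      simp only [Finset.coe_filter, Set.mem_setOf_eq, mem_univ, true_and] at hx hy
      exact hinj x y hx hy hf)
  simpa using this

lemma hbA : ∀ x : β, (univ.filter fun t : T => ((t.1, t.2.2) : β) = x).card ≤ N := by
  intro x
  apply card_filter_le_of_inj (fun t => t.2.1)
  rintro ⟨i, j, k⟩ ⟨i', j', k'⟩ h1 h2 hf
  have h := h1.trans h2.symm
  simp only [Prod.mk.injEq] at h ⊢
  exact ⟨h.1, hf, h.2⟩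

lemma hbB : ∀ x : β, (univ.filter fun t : T => ((t.2.2, t.2.1) : β) = x).card ≤ N := by
  intro x
  apply card_filter_le_of_inj (fun t => t.1)
  rintro ⟨i, j, k⟩ ⟨i', j', k'⟩ h1 h2 hf
  have h := h1.trans h2.symm
  simp only [Prod.mk.injEq] at h ⊢
  exact ⟨hf, h.2, h.1⟩

lemma hRow : ∀ v : β, (univ.filter fun w : β => w.1 = v.1).card ≤ N := by
  intro v
  apply card_filter_le_of_inj (fun w => w.2)
  rintro ⟨i, j⟩ ⟨i', j'⟩ h1 h2 hf
  simp only at h1 h2 ⊢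
  exact Prod.ext (h1.trans h2.symm) hf

lemma hCol : ∀ v : β, (univ.filter fun w : β => w.2 = v.2).card ≤ N := by
  intro v
  apply card_filter_le_of_inj (fun w => w.1)
  rintro ⟨i, j⟩ ⟨i', j'⟩ h1 h2 hf
  exact Prod.ext hf (h1.trans h2.symm)

lemma sumX_le (hN : 2 ≤ N) :
    ∑ p : Equiv.Perm β × Equiv.Perm β, ((Xcnt N p.1 p.2 : ℝ)) ^ 2
      ≤ 12 * (N:ℝ) ^ 2 * (Fintype.card (Equiv.Perm β) : ℝ) ^ 2 := by
  have hA := sum_sq_le hN (fun t : T => ((t.1, t.2.1) : β)) (fun t => (t.1, t.2.2))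
    (fun v => {v}) 1 (by simp) hbA
  have hB := sum_sq_le hN (fun t : T => ((t.1, t.2.1) : β)) (fun t => (t.2.2, t.2.1))
    (fun v => {v}) 1 (by simp) hbB
  have hpt : ∀ p : Equiv.Perm β × Equiv.Perm β,
      (Xcnt N p.1 p.2 : ℝ)
        ≤ ((univ.filter fun t : T => p.2 ((t.1, t.2.2) : β) ∈ ({p.1 ((t.1, t.2.1) : β)} : Finset β)).card : ℝ)
          + ((univ.filter fun t : T => p.2 ((t.2.2, t.2.1) : β) ∈ ({p.1 ((t.1, t.2.1) : β)} : Finset β)).card : ℝ) := by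
    intro p
    have : Xcnt N p.1 p.2
        ≤ (univ.filter fun t : T => p.2 ((t.1, t.2.2) : β) ∈ ({p.1 ((t.1, t.2.1) : β)} : Finset β)).card
          + (univ.filter fun t : T => p.2 ((t.2.2, t.2.1) : β) ∈ ({p.1 ((t.1, t.2.1) : β)} : Finset β)).card := by
      unfold Xcnt
      rw [Finset.filter_or]
      refine (Finset.card_union_le _ _).trans ?_
      apply add_le_add <;>
      · apply le_of_eq
        congr 1
        apply Finset.filter_congr
        intro t _
        simp [eq_comm]
    exact_mod_cast this
  calc ∑ p : Equiv.Perm β × Equiv.Perm β, ((Xcnt N p.1 p.2 : ℝ)) ^ 2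
      ≤ ∑ p : Equiv.Perm β × Equiv.Perm β,
          (2 * ((univ.filter fun t : T => p.2 ((t.1, t.2.2) : β) ∈ ({p.1 ((t.1, t.2.1) : β)} : Finset β)).card : ℝ)^2
           + 2 * ((univ.filter fun t : T => p.2 ((t.2.2, t.2.1) : β) ∈ ({p.1 ((t.1, t.2.1) : β)} : Finset β)).card : ℝ)^2) := by
        apply Finset.sum_le_sum
        intro p _
        have h1 := hpt p
        have h0 : (0:ℝ) ≤ (Xcnt N p.1 p.2 : ℝ) := by positivity
        have hcA : (0:ℝ) ≤ ((univ.filter fun t : T => p.2 ((t.1, t.2.2) : β) ∈ ({p.1 ((t.1, t.2.1) : β)} : Finset β)).card : ℝ) := by positivity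
        have hcB : (0:ℝ) ≤ ((univ.filter fun t : T => p.2 ((t.2.2, t.2.1) : β) ∈ ({p.1 ((t.1, t.2.1) : β)} : Finset β)).card : ℝ) := by positivity
        nlinarith [h1, h0, hcA, hcB, sq_nonneg (((univ.filter fun t : T => p.2 ((t.1, t.2.2) : β) ∈ ({p.1 ((t.1, t.2.1) : β)} : Finset β)).card : ℝ) - ((univ.filter fun t : T => p.2 ((t.2.2, t.2.1) : β) ∈ ({p.1 ((t.1, t.2.1) : β)} : Finset β)).card : ℝ))]
    _ ≤ 12 * (N:ℝ) ^ 2 * (Fintype.card (Equiv.Perm β) : ℝ) ^ 2 := by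
        rw [Finset.sum_add_distrib, ← Finset.mul_sum, ← Finset.mul_sum]
        have := hA
        have := hB
        norm_num at hA hB ⊢
        nlinarith [hA, hB]

lemma sq_add_four {x a b c d : ℝ} (hx : 0 ≤ x) (h : x ≤ a + b + c + d)
    (ha : 0 ≤ a) (hb : 0 ≤ b) (hc : 0 ≤ c) (hd : 0 ≤ d) :
    x ^ 2 ≤ 4 * (a ^ 2 + b ^ 2 + c ^ 2 + d ^ 2) := by
  nlinarith [sq_nonneg (a - b), sq_nonneg (a - c), sq_nonneg (a - d), sq_nonneg (b - c),
    sq_nonneg (b - d), sq_nonneg (c - d), sq_nonneg (a + b + c + d)]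

set_option maxHeartbeats 1000000 in
lemma sumY_le (hN : 2 ≤ N) :
    ∑ p : Equiv.Perm β × Equiv.Perm β, ((Ycnt N p.1 p.2 : ℝ)) ^ 2
      ≤ 48 * (N:ℝ) ^ 4 * (Fintype.card (Equiv.Perm β) : ℝ) ^ 2 := by
  set SR : β → Finset β := fun v => univ.filter fun w : β => w.1 = v.1 with hSR
  set SC : β → Finset β := fun v => univ.filter fun w : β => w.2 = v.2 with hSC
  set F1 : Equiv.Perm β × Equiv.Perm β → ℕ := fun p =>
    (univ.filter fun t : T => p.2 ((t.1, t.2.2) : β) ∈ SR (p.1 ((t.1, t.2.1) : β))).card with hF1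
  set F2 : Equiv.Perm β × Equiv.Perm β → ℕ := fun p =>
    (univ.filter fun t : T => p.2 ((t.2.2, t.2.1) : β) ∈ SR (p.1 ((t.1, t.2.1) : β))).card with hF2
  set F3 : Equiv.Perm β × Equiv.Perm β → ℕ := fun p =>
    (univ.filter fun t : T => p.2 ((t.1, t.2.2) : β) ∈ SC (p.1 ((t.1, t.2.1) : β))).card with hF3
  set F4 : Equiv.Perm β × Equiv.Perm β → ℕ := fun p =>
    (univ.filter fun t : T => p.2 ((t.2.2, t.2.1) : β) ∈ SC (p.1 ((t.1, t.2.1) : β))).card with hF4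
  have h1 := sum_sq_le hN (fun t : T => ((t.1, t.2.1) : β)) (fun t => (t.1, t.2.2)) SR N
    (fun v => hRow v) hbA
  have h2 := sum_sq_le hN (fun t : T => ((t.1, t.2.1) : β)) (fun t => (t.2.2, t.2.1)) SR N
    (fun v => hRow v) hbB
  have h3 := sum_sq_le hN (fun t : T => ((t.1, t.2.1) : β)) (fun t => (t.1, t.2.2)) SC N
    (fun v => hCol v) hbA
  have h4 := sum_sq_le hN (fun t : T => ((t.1, t.2.1) : β)) (fun t => (t.2.2, t.2.1)) SC N
    (fun v => hCol v) hbB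
  have hpt : ∀ p : Equiv.Perm β × Equiv.Perm β,
      Ycnt N p.1 p.2 ≤ F1 p + F2 p + F3 p + F4 p := by
    intro p
    have e1 : (univ.filter fun t : T =>
        (p.1 ((t.1, t.2.1) : β)).1 = (p.2 ((t.1, t.2.2) : β)).1 ∨
        (p.1 ((t.1, t.2.1) : β)).1 = (p.2 ((t.2.2, t.2.1) : β)).1).card ≤ F1 p + F2 p := by
      rw [Finset.filter_or]
      refine (Finset.card_union_le _ _).trans (le_of_eq ?_)
      rw [hF1, hF2]
      congr 1 <;>
      · congr 1
        apply Finset.filter_congr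
        intro t _
        simp [hSR, eq_comm]
    have e2 : (univ.filter fun t : T =>
        (p.1 ((t.1, t.2.1) : β)).2 = (p.2 ((t.1, t.2.2) : β)).2 ∨
        (p.1 ((t.1, t.2.1) : β)).2 = (p.2 ((t.2.2, t.2.1) : β)).2).card ≤ F3 p + F4 p := by
      rw [Finset.filter_or]
      refine (Finset.card_union_le _ _).trans (le_of_eq ?_)
      rw [hF3, hF4]
      congr 1 <;>
      · congr 1
        apply Finset.filter_congr
        intro t _
        simp [hSC, eq_comm]
    calc Ycnt N p.1 p.2 ≤ (F1 p + F2 p) + (F3 p + F4 p) := add_le_add e1 e2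
      _ = F1 p + F2 p + F3 p + F4 p := by ring
  have step : ∀ p : Equiv.Perm β × Equiv.Perm β,
      ((Ycnt N p.1 p.2 : ℝ)) ^ 2
        ≤ 4 * ((F1 p : ℝ)^2 + (F2 p : ℝ)^2 + (F3 p : ℝ)^2 + (F4 p : ℝ)^2) := by
    intro p
    apply sq_add_four (Nat.cast_nonneg _) _ (Nat.cast_nonneg _) (Nat.cast_nonneg _)
      (Nat.cast_nonneg _) (Nat.cast_nonneg _)
    exact_mod_cast hpt p
  calc ∑ p : Equiv.Perm β × Equiv.Perm β, ((Ycnt N p.1 p.2 : ℝ)) ^ 2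
      ≤ ∑ p : Equiv.Perm β × Equiv.Perm β,
          4 * ((F1 p : ℝ)^2 + (F2 p : ℝ)^2 + (F3 p : ℝ)^2 + (F4 p : ℝ)^2) :=
        Finset.sum_le_sum (fun p _ => step p)
    _ = 4 * ((∑ p : Equiv.Perm β × Equiv.Perm β, (F1 p : ℝ)^2)
          + (∑ p : Equiv.Perm β × Equiv.Perm β, (F2 p : ℝ)^2)
          + (∑ p : Equiv.Perm β × Equiv.Perm β, (F3 p : ℝ)^2)
          + (∑ p : Equiv.Perm β × Equiv.Perm β, (F4 p : ℝ)^2)) := by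
        rw [← Finset.mul_sum]
        congr 1
        rw [Finset.sum_add_distrib, Finset.sum_add_distrib, Finset.sum_add_distrib]
    _ ≤ 48 * (N:ℝ) ^ 4 * (Fintype.card (Equiv.Perm β) : ℝ) ^ 2 := by
        have hNR : (2:ℝ) ≤ (N:ℝ) := by exact_mod_cast hN
        have hKnn : (0:ℝ) ≤ (Fintype.card (Equiv.Perm β) : ℝ) := by positivity
        simp only [hF1, hF2, hF3, hF4]
        beta_reduce at h1 h2 h3 h4 ⊢
        have hNsq : (N:ℝ) + 2*(N:ℝ)^2 ≤ 3*(N:ℝ)^2 := by nlinarith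
        have hmul : ((N:ℝ) + 2*(N:ℝ)^2) * ((N:ℝ)^2 * (Fintype.card (Equiv.Perm β) : ℝ)^2)
            ≤ 3*(N:ℝ)^2 * ((N:ℝ)^2 * (Fintype.card (Equiv.Perm β) : ℝ)^2) :=
          mul_le_mul_of_nonneg_right hNsq (by positivity)
        nlinarith [h1, h2, h3, h4, hmul]

end PerN

open MeasureTheory
open scoped ENNReal

instance permMSC (N : ℕ) : MeasurableSingletonClass (Equiv.Perm (Fin N × Fin N)) :=
  ⟨fun _ => MeasurableSpace.measurableSet_top⟩

section MeasureBound

variable {N : ℕ}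

local notation "β" => (Fin N × Fin N)

noncomputable def unif2 (N : ℕ) :
    Measure (Equiv.Perm (Fin N × Fin N) × Equiv.Perm (Fin N × Fin N)) :=
  ((PMF.uniformOfFintype (Equiv.Perm (Fin N × Fin N))).toMeasure).prod
    ((PMF.uniformOfFintype (Equiv.Perm (Fin N × Fin N))).toMeasure)

lemma unif2_le (s : Finset (Equiv.Perm β × Equiv.Perm β)) :
    unif2 N ↑s ≤ (s.card : ℝ≥0∞) * ((Fintype.card (Equiv.Perm β) : ℝ≥0∞))⁻¹
      * ((Fintype.card (Equiv.Perm β) : ℝ≥0∞))⁻¹ := by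
  have hs : (↑s : Set (Equiv.Perm β × Equiv.Perm β)) = ⋃ p ∈ s, {p} := (Set.biUnion_of_singleton _).symm
  rw [hs]
  refine (measure_biUnion_finset_le _ _).trans ?_
  have hone : ∀ p ∈ s, unif2 N {p}
      = ((Fintype.card (Equiv.Perm β) : ℝ≥0∞))⁻¹
        * ((Fintype.card (Equiv.Perm β) : ℝ≥0∞))⁻¹ := by
    intro p _
    have : ({p} : Set (Equiv.Perm β × Equiv.Perm β)) = {p.1} ×ˢ {p.2} := by
      rw [Set.singleton_prod_singleton]
    rw [unif2, this, Measure.prod_prod,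
      PMF.toMeasure_apply_singleton _ _ (measurableSet_singleton _),
      PMF.toMeasure_apply_singleton _ _ (measurableSet_singleton _),
      PMF.uniformOfFintype_apply, PMF.uniformOfFintype_apply]
  rw [Finset.sum_congr rfl hone, Finset.sum_const, nsmul_eq_mul, mul_assoc]

lemma cheb_card {γ : Type*} [Fintype γ] [DecidableEq γ] (f : γ → ℕ) (r : ℝ) (hr : 0 < r) :
    ((univ.filter fun p : γ => r ≤ (f p : ℝ)).card : ℝ) * r ^ 2 ≤ ∑ p : γ, ((f p : ℝ)) ^ 2 := by
  calc ((univ.filter fun p : γ => r ≤ (f p : ℝ)).card : ℝ) * r ^ 2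
      = ∑ _p ∈ univ.filter fun p : γ => r ≤ (f p : ℝ), r ^ 2 := by
        rw [Finset.sum_const, nsmul_eq_mul]
    _ ≤ ∑ p ∈ univ.filter fun p : γ => r ≤ (f p : ℝ), ((f p : ℝ)) ^ 2 := by
        apply Finset.sum_le_sum
        intro p hp
        have := (mem_filter.mp hp).2
        nlinarith
    _ ≤ ∑ p : γ, ((f p : ℝ)) ^ 2 := by
        apply Finset.sum_le_sum_of_subset_of_nonneg (Finset.filter_subset _ _)
        intro p _ _
        positivity

/-- key measure bound -/
lemma unif2_filter_le (f : Equiv.Perm β × Equiv.Perm β → ℕ) (r C : ℝ) (hr : 0 < r)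
    (hC : 0 ≤ C)
    (hsum : ∑ p : Equiv.Perm β × Equiv.Perm β, ((f p : ℝ)) ^ 2
      ≤ C * (Fintype.card (Equiv.Perm β) : ℝ) ^ 2) :
    unif2 N {p : Equiv.Perm β × Equiv.Perm β | r ≤ (f p : ℝ)}
      ≤ ENNReal.ofReal (C / r ^ 2) := by
  classical
  set K : ℕ := Fintype.card (Equiv.Perm β) with hKdef
  have hKpos : 0 < K := Fintype.card_pos
  have hset : {p : Equiv.Perm β × Equiv.Perm β | r ≤ (f p : ℝ)}
      = ↑(univ.filter fun p : Equiv.Perm β × Equiv.Perm β => r ≤ (f p : ℝ)) := by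
    ext p; simp
  have hcard : ((univ.filter fun p : Equiv.Perm β × Equiv.Perm β => r ≤ (f p : ℝ)).card : ℝ)
      ≤ (C / r ^ 2) * (K : ℝ) ^ 2 := by
    have h1 := cheb_card f r hr
    have h2 := le_trans h1 hsum
    rw [div_mul_eq_mul_div, le_div_iff₀ (by positivity)]
    calc ((univ.filter fun p : Equiv.Perm β × Equiv.Perm β => r ≤ (f p : ℝ)).card : ℝ) * r ^ 2
        ≤ C * (K:ℝ)^2 := h2
      _ = C * (K:ℝ)^2 := rfl
  rw [hset]
  refine (unif2_le _).trans ?_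
  have hcast : ((univ.filter fun p : Equiv.Perm β × Equiv.Perm β => r ≤ (f p : ℝ)).card : ℝ≥0∞)
      ≤ ENNReal.ofReal (C / r ^ 2) * (K : ℝ≥0∞) * (K : ℝ≥0∞) := by
    calc ((univ.filter fun p : Equiv.Perm β × Equiv.Perm β => r ≤ (f p : ℝ)).card : ℝ≥0∞)
        = ENNReal.ofReal ((univ.filter fun p : Equiv.Perm β × Equiv.Perm β => r ≤ (f p : ℝ)).card : ℝ) := by
          rw [ENNReal.ofReal_natCast]
      _ ≤ ENNReal.ofReal ((C / r ^ 2) * (K : ℝ) ^ 2) := ENNReal.ofReal_le_ofReal hcard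
      _ = ENNReal.ofReal (C / r ^ 2) * ENNReal.ofReal ((K:ℝ)^2) := by
          rw [ENNReal.ofReal_mul (by positivity)]
      _ = ENNReal.ofReal (C / r ^ 2) * (K : ℝ≥0∞) * (K : ℝ≥0∞) := by
          have hKK : ENNReal.ofReal ((K:ℝ)^2) = (K : ℝ≥0∞) * (K : ℝ≥0∞) := by
            rw [show ((K:ℝ)^2) = ((K^2 : ℕ) : ℝ) by push_cast; ring, ENNReal.ofReal_natCast]
            push_cast
            ring
          rw [hKK, mul_assoc]
  have hK0 : (K : ℝ≥0∞) ≠ 0 := by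
    simp [hKpos.ne']
  have hKtop : (K : ℝ≥0∞) ≠ ⊤ := ENNReal.natCast_ne_top K
  calc ((univ.filter fun p : Equiv.Perm β × Equiv.Perm β => r ≤ (f p : ℝ)).card : ℝ≥0∞)
        * ((K : ℝ≥0∞))⁻¹ * ((K : ℝ≥0∞))⁻¹
      ≤ ENNReal.ofReal (C / r ^ 2) * (K : ℝ≥0∞) * (K : ℝ≥0∞) * ((K : ℝ≥0∞))⁻¹ * ((K : ℝ≥0∞))⁻¹ := by
        exact mul_le_mul_left (mul_le_mul_left hcast _) _
    _ = ENNReal.ofReal (C / r ^ 2) := by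
        rw [mul_assoc, mul_assoc, mul_assoc]
        rw [show (K : ℝ≥0∞) * ((K : ℝ≥0∞) * (((K : ℝ≥0∞))⁻¹ * ((K : ℝ≥0∞))⁻¹))
            = ((K : ℝ≥0∞) * ((K : ℝ≥0∞))⁻¹) * ((K : ℝ≥0∞) * ((K : ℝ≥0∞))⁻¹) by ring]
        rw [ENNReal.mul_inv_cancel hK0 hKtop]
        simp

end MeasureBound

open Filter

lemma tendsto_aux (f : ℕ → ℝ) (hf0 : ∀ N, 0 ≤ f N)
    (h : ∀ m : ℕ, ∀ᶠ N in atTop, f N < 1 / (m + 1)) :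
    Tendsto f atTop (nhds 0) := by
  rw [Metric.tendsto_atTop]
  intro ε hε
  obtain ⟨m, hm⟩ := exists_nat_one_div_lt hε
  obtain ⟨n₀, hn₀⟩ := (h m).exists_forall_of_atTop
  refine ⟨n₀, fun n hn => ?_⟩
  rw [Real.dist_eq, sub_zero, abs_of_nonneg (hf0 n)]
  exact lt_trans (hn₀ n hn) hm

section PerNFinal

lemma perN_X (N : ℕ) (hN : 2 ≤ N) (ε : ℝ) (hε : 0 < ε) :
    unif2 N {p : Equiv.Perm (Fin N × Fin N) × Equiv.Perm (Fin N × Fin N) |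
        ε ≤ (Xcnt N p.1 p.2 : ℝ) / (N:ℝ)^2}
      ≤ ENNReal.ofReal (12 / (ε^2 * (N:ℝ)^2)) := by
  have hN0 : (0:ℝ) < (N:ℝ)^2 := by
    have : (0:ℝ) < (N:ℝ) := by exact_mod_cast (by omega : 0 < N)
    positivity
  have hset : {p : Equiv.Perm (Fin N × Fin N) × Equiv.Perm (Fin N × Fin N) |
        ε ≤ (Xcnt N p.1 p.2 : ℝ) / (N:ℝ)^2}
      = {p : Equiv.Perm (Fin N × Fin N) × Equiv.Perm (Fin N × Fin N) |
        ε * (N:ℝ)^2 ≤ (Xcnt N p.1 p.2 : ℝ)} := by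
    ext p
    simp only [Set.mem_setOf_eq]
    rw [le_div_iff₀ hN0]
  rw [hset]
  have hb := unif2_filter_le (N := N) (fun p => Xcnt N p.1 p.2) (ε * (N:ℝ)^2) (12 * (N:ℝ)^2)
    (by positivity) (by positivity) (by
      have := sumX_le (N := N) hN
      calc ∑ p : Equiv.Perm (Fin N × Fin N) × Equiv.Perm (Fin N × Fin N),
            ((Xcnt N p.1 p.2 : ℝ)) ^ 2
          ≤ 12 * (N:ℝ)^2 * (Fintype.card (Equiv.Perm (Fin N × Fin N)) : ℝ)^2 := this
        _ = 12 * (N:ℝ)^2 * (Fintype.card (Equiv.Perm (Fin N × Fin N)) : ℝ)^2 := rfl)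
  refine hb.trans (le_of_eq ?_)
  congr 1
  field_simp

lemma perN_Y (N : ℕ) (hN : 2 ≤ N) (ε : ℝ) (hε : 0 < ε) :
    unif2 N {p : Equiv.Perm (Fin N × Fin N) × Equiv.Perm (Fin N × Fin N) |
        ε ≤ (Ycnt N p.1 p.2 : ℝ) / (N:ℝ)^3}
      ≤ ENNReal.ofReal (48 / (ε^2 * (N:ℝ)^2)) := by
  have hNpos : (0:ℝ) < (N:ℝ) := by exact_mod_cast (by omega : 0 < N)
  have hN0 : (0:ℝ) < (N:ℝ)^3 := by positivity
  have hset : {p : Equiv.Perm (Fin N × Fin N) × Equiv.Perm (Fin N × Fin N) |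
        ε ≤ (Ycnt N p.1 p.2 : ℝ) / (N:ℝ)^3}
      = {p : Equiv.Perm (Fin N × Fin N) × Equiv.Perm (Fin N × Fin N) |
        ε * (N:ℝ)^3 ≤ (Ycnt N p.1 p.2 : ℝ)} := by
    ext p
    simp only [Set.mem_setOf_eq]
    rw [le_div_iff₀ hN0]
  rw [hset]
  have hb := unif2_filter_le (N := N) (fun p => Ycnt N p.1 p.2) (ε * (N:ℝ)^3) (48 * (N:ℝ)^4)
    (by positivity) (by positivity) (sumY_le (N := N) hN)
  refine hb.trans (le_of_eq ?_)
  congr 1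
  field_simp

end PerNFinal

set_option maxHeartbeats 1600000 in
/-- `P` is the product, over `N`, of uniform probability measures on `S([N]²) × S([N]²)`: a
probability measure on `∏_N (S([N]²) × S([N]²))` whose coordinate pairs are independent, each
distributed as the product of two uniform measures (so the two sequences of permutations are
independent, uniform, and independent of each other).  Then almost surely
`X_N/N² → 0` and `Y_N/N³ → 0` for the pair, i.e. almost every realization satisfies (C3). -/
theorem stmt19
    (P : Measure ((N : ℕ) → Equiv.Perm (Fin N × Fin N) × Equiv.Perm (Fin N × Fin N)))
    (hP : IsProbabilityMeasure P)
    (hindep : ProbabilityTheory.iIndepFun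
      (fun N (ω : (k : ℕ) → Equiv.Perm (Fin k × Fin k) × Equiv.Perm (Fin k × Fin k)) => ω N) P)
    (hlaw : ∀ N : ℕ, P.map (fun ω => ω N) =
      ((PMF.uniformOfFintype (Equiv.Perm (Fin N × Fin N))).toMeasure).prod
        ((PMF.uniformOfFintype (Equiv.Perm (Fin N × Fin N))).toMeasure)) :
    ∀ᵐ ω ∂P,
      Tendsto (fun N : ℕ => (Xcnt N (ω N).1 (ω N).2 : ℝ) / (N : ℝ) ^ 2) atTop (nhds 0) ∧
      Tendsto (fun N : ℕ => (Ycnt N (ω N).1 (ω N).2 : ℝ) / (N : ℝ) ^ 3) atTop (nhds 0) := by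
  classical
  have hmeasA : ∀ (N : ℕ)
      (A : Set (Equiv.Perm (Fin N × Fin N) × Equiv.Perm (Fin N × Fin N))), MeasurableSet A :=
    fun N A => (Set.toFinite A).countable.measurableSet
  have hmap : ∀ (N : ℕ)
      (A : Set (Equiv.Perm (Fin N × Fin N) × Equiv.Perm (Fin N × Fin N))),
      P ((fun ω => ω N) ⁻¹' A) = unif2 N A := by
    intro N A
    rw [← Measure.map_apply (measurable_pi_apply N) (hmeasA N A), hlaw N]
    rfl
  have key : ∀ m : ℕ, ∀ᵐ ω ∂P, ∀ᶠ N in atTop,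
      (Xcnt N (ω N).1 (ω N).2 : ℝ) / (N:ℝ)^2 < 1/(m+1) ∧
      (Ycnt N (ω N).1 (ω N).2 : ℝ) / (N:ℝ)^3 < 1/(m+1) := by
    intro m
    set ε : ℝ := 1/(m+1) with hεdef
    have hε : 0 < ε := by positivity
    set s : ℕ → Set ((N : ℕ) → Equiv.Perm (Fin N × Fin N) × Equiv.Perm (Fin N × Fin N)) :=
      fun n =>
        {ω | ε ≤ (Xcnt (n+2) (ω (n+2)).1 (ω (n+2)).2 : ℝ) / ((n+2 : ℕ) : ℝ)^2}
        ∪ {ω | ε ≤ (Ycnt (n+2) (ω (n+2)).1 (ω (n+2)).2 : ℝ) / ((n+2 : ℕ) : ℝ)^3} with hsdef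
    have hsbound : ∀ n, P (s n) ≤ ENNReal.ofReal (60 / (ε^2 * ((n+2 : ℕ) : ℝ)^2)) := by
      intro n
      refine (measure_union_le _ _).trans ?_
      have e1 : {ω : (N : ℕ) → Equiv.Perm (Fin N × Fin N) × Equiv.Perm (Fin N × Fin N) |
            ε ≤ (Xcnt (n+2) (ω (n+2)).1 (ω (n+2)).2 : ℝ) / ((n+2 : ℕ) : ℝ)^2}
          = (fun ω : (N : ℕ) → Equiv.Perm (Fin N × Fin N) × Equiv.Perm (Fin N × Fin N) =>
              ω (n+2)) ⁻¹'
            {p : Equiv.Perm (Fin (n+2) × Fin (n+2)) × Equiv.Perm (Fin (n+2) × Fin (n+2)) |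
              ε ≤ (Xcnt (n+2) p.1 p.2 : ℝ) / ((n+2 : ℕ) : ℝ)^2} := rfl
      have e2 : {ω : (N : ℕ) → Equiv.Perm (Fin N × Fin N) × Equiv.Perm (Fin N × Fin N) |
            ε ≤ (Ycnt (n+2) (ω (n+2)).1 (ω (n+2)).2 : ℝ) / ((n+2 : ℕ) : ℝ)^3}
          = (fun ω : (N : ℕ) → Equiv.Perm (Fin N × Fin N) × Equiv.Perm (Fin N × Fin N) =>
              ω (n+2)) ⁻¹'
            {p : Equiv.Perm (Fin (n+2) × Fin (n+2)) × Equiv.Perm (Fin (n+2) × Fin (n+2)) |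
              ε ≤ (Ycnt (n+2) p.1 p.2 : ℝ) / ((n+2 : ℕ) : ℝ)^3} := rfl
      have hX := perN_X (n+2) (by omega) ε hε
      have hY := perN_Y (n+2) (by omega) ε hε
      calc P {ω | ε ≤ (Xcnt (n+2) (ω (n+2)).1 (ω (n+2)).2 : ℝ) / ((n+2 : ℕ) : ℝ)^2}
            + P {ω | ε ≤ (Ycnt (n+2) (ω (n+2)).1 (ω (n+2)).2 : ℝ) / ((n+2 : ℕ) : ℝ)^3}
          ≤ ENNReal.ofReal (12 / (ε^2 * ((n+2 : ℕ) : ℝ)^2))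
            + ENNReal.ofReal (48 / (ε^2 * ((n+2 : ℕ) : ℝ)^2)) := by
            apply add_le_add
            · rw [e1, hmap]
              exact hX
            · rw [e2, hmap]
              exact hY
        _ = ENNReal.ofReal (60 / (ε^2 * ((n+2 : ℕ) : ℝ)^2)) := by
            rw [← ENNReal.ofReal_add (by positivity) (by positivity)]
            congr 1
            have hc : (0:ℝ) < ε^2 * ((n+2 : ℕ) : ℝ)^2 := by positivity
            field_simp
            norm_num
    have hsummable : Summable (fun n : ℕ => 60 / (ε^2 * ((n+2 : ℕ) : ℝ)^2)) := by
      have hs1 : Summable (fun n : ℕ => 1 / ((n:ℝ))^2) := by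
        simpa using Real.summable_one_div_nat_pow.mpr (by norm_num : 1 < 2)
      have hs2 : Summable (fun n : ℕ => 1 / (((n+2 : ℕ)):ℝ)^2) :=
        (summable_nat_add_iff 2).mpr hs1
      apply (hs2.mul_left (60 / ε^2)).congr
      intro n
      have : (((n+2:ℕ)):ℝ) ≠ 0 := by positivity
      field_simp
    have htsum : (∑' n, P (s n)) ≠ ⊤ := by
      have h1 : (∑' n, P (s n)) ≤ ∑' n, ENNReal.ofReal (60 / (ε^2 * ((n+2 : ℕ) : ℝ)^2)) :=
        ENNReal.tsum_le_tsum hsbound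
      have h2 : (∑' n, ENNReal.ofReal (60 / (ε^2 * ((n+2 : ℕ) : ℝ)^2)))
          = ENNReal.ofReal (∑' n, 60 / (ε^2 * ((n+2 : ℕ) : ℝ)^2)) :=
        (ENNReal.ofReal_tsum_of_nonneg (fun n => by positivity) hsummable).symm
      rw [h2] at h1
      exact ne_top_of_le_ne_top ENNReal.ofReal_ne_top h1
    filter_upwards [ae_eventually_notMem htsum] with ω hω
    rw [eventually_atTop] at hω ⊢
    obtain ⟨n₀, hn₀⟩ := hω
    refine ⟨n₀ + 2, fun N hN => ?_⟩
    have h := hn₀ (N - 2) (by omega)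
    simp only [hsdef, Set.mem_union, Set.mem_setOf_eq, not_or, not_le] at h
    have hNe : N - 2 + 2 = N := by omega
    rw [hNe] at h
    exact h
  have all := ae_all_iff.mpr key
  filter_upwards [all] with ω hω
  constructor
  · apply tendsto_aux _ (fun N => by positivity)
    intro m
    exact (hω m).mono (fun N h => h.1)
  · apply tendsto_aux _ (fun N => by positivity)
    intro m
    exact (hω m).mono (fun N h => h.2)
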